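/- Let η⁺(y) = max(y,0) be the positive-part denoiser and let F_{1,ε,+} be the set of Borel probability measures ν on [0,∞) with ν({x : x ≠ 0}) ≤ ε. Then for every ε ∈ [0,1], sup_{ν∈F_{1,ε,+}} E[(X − η⁺(X+Z))²] = (1+ε)/2, where X ∼ ν and Z ∼ N(0,1) are independent. -/

import Mathlib

open MeasureTheory ProbabilityTheory ENNReal

noncomputable section

/-- The class `F_{1,ε,+}` of Borel probability measures `ν` on `[0,∞)` with
`ν({x : x ≠ 0}) ≤ ε`. -/
def posSparse (ε : ℝ) : Set (Measure ℝ) :=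
  {ν | IsProbabilityMeasure ν ∧ ν {x : ℝ | x < 0} = 0 ∧
    ν {x : ℝ | x ≠ 0} ≤ ENNReal.ofReal ε}

namespace PosPartAux

open Real Set

/-- The standard gaussian pdf, explicitly. -/
lemma pdf_eq (x : ℝ) :
    gaussianPDFReal 0 1 x = (Real.sqrt (2 * π))⁻¹ * rexp (-(1/2) * x ^ 2) := by
  rw [gaussianPDFReal]
  simp only [NNReal.coe_one, mul_one, sub_zero]
  congr 1
  ring

lemma J_eq : ∫ x in Ioi (0:ℝ), x ^ 2 * rexp (-(1/2) * x ^ 2) = Real.sqrt (2 * π) / 2 := by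
  have h := integral_rpow_mul_exp_neg_mul_rpow (p := 2) (q := 2) (b := 1/2)
    (by norm_num) (by norm_num) (by norm_num)
  have hc : ∫ x in Ioi (0:ℝ), x ^ (2:ℝ) * rexp (-(1/2) * x ^ (2:ℝ))
      = ∫ x in Ioi (0:ℝ), x ^ 2 * rexp (-(1/2) * x ^ 2) := by
    refine setIntegral_congr_fun measurableSet_Ioi fun x _ => ?_
    rw [show (2:ℝ) = ((2:ℕ):ℝ) by norm_num, Real.rpow_natCast]
  rw [hc] at h
  rw [h]
  have hG : Real.Gamma (((2:ℝ) + 1) / 2) = Real.sqrt π / 2 := by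
    rw [show (((2:ℝ)) + 1) / 2 = (1/2 : ℝ) + 1 by norm_num,
      Real.Gamma_add_one (by norm_num), Real.Gamma_one_half_eq]
    ring
  have hb : ((1:ℝ)/2) ^ (-((2:ℝ) + 1) / (2:ℝ)) = 2 * Real.sqrt 2 := by
    rw [show (-((2:ℝ) + 1) / (2:ℝ)) = -(3/2 : ℝ) by norm_num,
      show ((1:ℝ)/2) = (2:ℝ)⁻¹ by norm_num,
      Real.inv_rpow (by norm_num : (0:ℝ) ≤ 2),
      Real.rpow_neg (by norm_num : (0:ℝ) ≤ 2), inv_inv,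
      show (3/2 : ℝ) = 1 + 1/2 by norm_num,
      Real.rpow_add (by norm_num : (0:ℝ) < 2), Real.rpow_one,
      ← Real.sqrt_eq_rpow]
  rw [hG, hb, show Real.sqrt (2 * π) = Real.sqrt 2 * Real.sqrt π from
    Real.sqrt_mul (by norm_num) π]
  ring

lemma K_eq : ∫ x : ℝ, x ^ 2 * rexp (-(1/2) * x ^ 2) = Real.sqrt (2 * π) := by
  have h := integral_comp_abs (f := fun t : ℝ => t ^ 2 * rexp (-(1/2) * t ^ 2))
  simp only [sq_abs] at h
  rw [h, J_eq]
  ring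

lemma sqrt_two_pi_pos : 0 < Real.sqrt (2 * π) :=
  Real.sqrt_pos.mpr (by positivity)

lemma integrable_sq_pdf : Integrable (fun x : ℝ => x ^ 2 * gaussianPDFReal 0 1 x) := by
  have h : Integrable (fun x : ℝ => x ^ ((2:ℕ):ℝ) * rexp (-(1/2) * x ^ 2)) :=
    integrable_rpow_mul_exp_neg_mul_sq (by norm_num) (by norm_num)
  have h2 : (fun x : ℝ => x ^ 2 * gaussianPDFReal 0 1 x)
      = fun x : ℝ => (Real.sqrt (2 * π))⁻¹ * (x ^ ((2:ℕ):ℝ) * rexp (-(1/2) * x ^ 2)) := by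
    funext x
    rw [pdf_eq, Real.rpow_natCast]
    ring
  rw [h2]
  exact h.const_mul _

lemma integrable_maxsq_pdf :
    Integrable (fun x : ℝ => max x 0 ^ 2 * gaussianPDFReal 0 1 x) := by
  have hmax : ∀ x : ℝ, max x 0 ^ 2 ≤ x ^ 2 := by
    intro x
    rcases le_total x 0 with h | h
    · rw [max_eq_right h]; simpa using sq_nonneg x
    · rw [max_eq_left h]
  refine integrable_sq_pdf.mono ?_ (Filter.Eventually.of_forall fun x => ?_)
  · exact (((measurable_id.max measurable_const).pow_const 2).mul
      (measurable_gaussianPDFReal 0 1)).aestronglyMeasurable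
  · have h0 := gaussianPDFReal_nonneg 0 1 x
    rw [Real.norm_eq_abs, Real.norm_eq_abs,
      abs_of_nonneg (mul_nonneg (sq_nonneg _) h0),
      abs_of_nonneg (mul_nonneg (sq_nonneg _) h0)]
    exact mul_le_mul_of_nonneg_right (hmax x) h0

/-- Generic conversion: `lintegral` against the standard gaussian of a nonneg function. -/
lemma lintegral_gaussian_eq (h : ℝ → ℝ) (hm : Measurable h) (h0 : ∀ x, 0 ≤ h x)
    (hi : Integrable (fun x => h x * gaussianPDFReal 0 1 x)) :
    ∫⁻ x, ENNReal.ofReal (h x) ∂(gaussianReal 0 1)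
      = ENNReal.ofReal (∫ x, h x * gaussianPDFReal 0 1 x) := by
  rw [gaussianReal_of_var_ne_zero 0 one_ne_zero,
    lintegral_withDensity_eq_lintegral_mul _ (measurable_gaussianPDF 0 1)
      (hm.ennreal_ofReal), ofReal_integral_eq_lintegral_ofReal hi
      (Filter.Eventually.of_forall fun x =>
        mul_nonneg (h0 x) (gaussianPDFReal_nonneg 0 1 x))]
  congr 1 with x
  simp only [Pi.mul_apply, gaussianPDF]
  rw [← ENNReal.ofReal_mul (gaussianPDFReal_nonneg 0 1 x), mul_comm]

lemma lint_sq : ∫⁻ x, ENNReal.ofReal (x ^ 2) ∂(gaussianReal 0 1) = 1 := by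
  rw [lintegral_gaussian_eq _ (by fun_prop) (fun x => sq_nonneg x)
    integrable_sq_pdf]
  have : ∫ x : ℝ, x ^ 2 * gaussianPDFReal 0 1 x = 1 := by
    have h2 : (fun x : ℝ => x ^ 2 * gaussianPDFReal 0 1 x)
        = fun x : ℝ => (Real.sqrt (2 * π))⁻¹ * (x ^ 2 * rexp (-(1/2) * x ^ 2)) := by
      funext x; rw [pdf_eq]; ring
    rw [h2, integral_const_mul, K_eq, inv_mul_cancel₀ sqrt_two_pi_pos.ne']
  rw [this, ENNReal.ofReal_one]

lemma lint_maxsq :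
    ∫⁻ x, ENNReal.ofReal (max x 0 ^ 2) ∂(gaussianReal 0 1) = ENNReal.ofReal (1/2) := by
  rw [lintegral_gaussian_eq _ (by fun_prop) (fun x => sq_nonneg _) integrable_maxsq_pdf]
  congr 1
  have hsupp : ∀ x ∉ Ioi (0:ℝ), max x 0 ^ 2 * gaussianPDFReal 0 1 x = 0 := by
    intro x hx
    simp only [mem_Ioi, not_lt] at hx
    rw [max_eq_right hx]
    ring
  rw [← setIntegral_eq_integral_of_forall_compl_eq_zero hsupp]
  have : ∀ x ∈ Ioi (0:ℝ), max x 0 ^ 2 * gaussianPDFReal 0 1 x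
      = (Real.sqrt (2 * π))⁻¹ * (x ^ 2 * rexp (-(1/2) * x ^ 2)) := by
    intro x hx
    rw [max_eq_left (le_of_lt hx), pdf_eq]
    ring
  rw [setIntegral_congr_fun measurableSet_Ioi this, integral_const_mul, J_eq]
  field_simp

/-- Pointwise bound: for `0 ≤ x`, the squared error is at most `z ^ 2`. -/
lemma val_le (x z : ℝ) (hx : 0 ≤ x) : (x - max (x + z) 0) ^ 2 ≤ z ^ 2 := by
  rcases le_total 0 (x + z) with h | h
  · rw [max_eq_left h]
    nlinarith [sq_nonneg z]
  · rw [max_eq_right h]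
    nlinarith

/-- Pointwise monotonicity in the signal. -/
lemma val_mono {a b : ℝ} (z : ℝ) (ha : 0 ≤ a) (hab : a ≤ b) :
    (a - max (a + z) 0) ^ 2 ≤ (b - max (b + z) 0) ^ 2 := by
  rcases le_total 0 (a + z) with h1 | h1
  · have h2 : 0 ≤ b + z := by linarith
    rw [max_eq_left h1, max_eq_left h2]
    ring_nf
    exact le_refl _
  · rcases le_total 0 (b + z) with h2 | h2
    · rw [max_eq_right h1, max_eq_left h2]
      nlinarith
    · rw [max_eq_right h1, max_eq_right h2]
      nlinarith

end PosPartAux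

/-- **Minimax MSE of the positive-part denoiser.**
For `η⁺(y) = max(y,0)` and every `ε ∈ [0,1]`,
`sup_{ν ∈ F_{1,ε,+}} E (X − η⁺(X+Z))² = (1+ε)/2`, with `X ∼ ν` and
`Z ∼ N(0,1)` independent. -/
theorem pos_part_minimax (ε : ℝ) (hε0 : 0 ≤ ε) (hε1 : ε ≤ 1) :
    (⨆ ν ∈ posSparse ε,
      ∫⁻ p : ℝ × ℝ, ENNReal.ofReal ((p.1 - max (p.1 + p.2) 0) ^ 2)
        ∂(ν.prod (gaussianReal 0 1)))
      = ENNReal.ofReal ((1 + ε) / 2) := by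
  classical
  have hmeas : Measurable fun p : ℝ × ℝ =>
      ENNReal.ofReal ((p.1 - max (p.1 + p.2) 0) ^ 2) := by fun_prop
  set F : ℝ → ℝ≥0∞ := fun x =>
    ∫⁻ z, ENNReal.ofReal ((x - max (x + z) 0) ^ 2) ∂(gaussianReal 0 1) with hFdef
  have hF0 : F 0 = ENNReal.ofReal (1/2) := by
    have : ∀ z : ℝ, ENNReal.ofReal (((0:ℝ) - max (0 + z) 0) ^ 2)
        = ENNReal.ofReal (max z 0 ^ 2) := by
      intro z
      rw [zero_add, zero_sub, neg_sq]
    rw [hFdef]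
    simp only [this]
    exact PosPartAux.lint_maxsq
  have hFle : ∀ x : ℝ, 0 ≤ x → F x ≤ 1 := by
    intro x hx
    calc F x ≤ ∫⁻ z, ENNReal.ofReal (z ^ 2) ∂(gaussianReal 0 1) :=
          lintegral_mono fun z => ENNReal.ofReal_le_ofReal (PosPartAux.val_le x z hx)
      _ = 1 := PosPartAux.lint_sq
  apply le_antisymm
  · -- upper bound
    refine iSup₂_le fun ν hν => ?_
    haveI := hν.1
    rw [MeasureTheory.lintegral_prod _ hmeas.aemeasurable]
    have hcompl : {x : ℝ | x ≠ 0} = ({0} : Set ℝ)ᶜ := by ext x; simp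
    have hB : ν (({0} : Set ℝ)ᶜ) ≤ ENNReal.ofReal ε := hcompl ▸ hν.2.2
    have hae : ∀ᵐ x ∂ν, F x ≤ 1 := by
      have h0 : ∀ᵐ x ∂ν, (0:ℝ) ≤ x := by
        rw [ae_iff]
        convert hν.2.1 using 2
        ext x; simp [not_le]
      filter_upwards [h0] with x hx using hFle x hx
    have hAB : ν {0} + ν (({0} : Set ℝ)ᶜ) = 1 := by
      rw [measure_add_measure_compl (measurableSet_singleton 0), measure_univ]
    have hhalf2 : ENNReal.ofReal (1/2) + ENNReal.ofReal (1/2) = 1 := by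
      rw [← ENNReal.ofReal_add (by norm_num) (by norm_num)]
      norm_num
    calc ∫⁻ x, F x ∂ν
        = ∫⁻ x in {0}, F x ∂ν + ∫⁻ x in ({0} : Set ℝ)ᶜ, F x ∂ν :=
          (lintegral_add_compl F (measurableSet_singleton 0)).symm
      _ ≤ ENNReal.ofReal (1/2) * ν {0} + ν (({0} : Set ℝ)ᶜ) := by
          refine add_le_add ?_ ?_
          · rw [lintegral_singleton, hF0]
          · calc ∫⁻ x in ({0} : Set ℝ)ᶜ, F x ∂ν
                ≤ ∫⁻ _ in ({0} : Set ℝ)ᶜ, 1 ∂ν :=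
                  lintegral_mono_ae (ae_restrict_of_ae hae)
              _ = ν (({0} : Set ℝ)ᶜ) := setLIntegral_one _
      _ = ENNReal.ofReal (1/2) * (ν {0} + ν (({0} : Set ℝ)ᶜ))
            + ENNReal.ofReal (1/2) * ν (({0} : Set ℝ)ᶜ) := by
          rw [mul_add]
          nth_rewrite 1 [show ν (({0} : Set ℝ)ᶜ)
            = (ENNReal.ofReal (1/2) + ENNReal.ofReal (1/2)) * ν (({0} : Set ℝ)ᶜ) by
              rw [hhalf2, one_mul]]
          ring
      _ ≤ ENNReal.ofReal (1/2) + ENNReal.ofReal (1/2) * ENNReal.ofReal ε := by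
          rw [hAB, mul_one]
          exact add_le_add_right (mul_le_mul_right hB _) _
      _ = ENNReal.ofReal ((1 + ε) / 2) := by
          rw [← ENNReal.ofReal_mul (by norm_num),
            ← ENNReal.ofReal_add (by norm_num) (by positivity)]
          congr 1
          ring
  · -- lower bound
    have hsum : (⨆ n : ℕ, F (n : ℝ)) = 1 := by
      have hme : ∀ n : ℕ, Measurable fun z : ℝ =>
          ENNReal.ofReal (((n:ℝ) - max ((n:ℝ) + z) 0) ^ 2) := fun n => by fun_prop
      have hmono : Monotone fun (n : ℕ) (z : ℝ) =>
          ENNReal.ofReal (((n:ℝ) - max ((n:ℝ) + z) 0) ^ 2) := by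
        intro n m hnm
        intro z
        exact ENNReal.ofReal_le_ofReal
          (PosPartAux.val_mono z (Nat.cast_nonneg n) (Nat.cast_le.2 hnm))
      rw [hFdef]
      rw [← lintegral_iSup hme hmono]
      have hptw : ∀ z : ℝ, (⨆ n : ℕ, ENNReal.ofReal (((n:ℝ) - max ((n:ℝ) + z) 0) ^ 2))
          = ENNReal.ofReal (z ^ 2) := by
        intro z
        apply le_antisymm
        · exact iSup_le fun n =>
            ENNReal.ofReal_le_ofReal (PosPartAux.val_le _ z (Nat.cast_nonneg n))
        · obtain ⟨n, hn⟩ := exists_nat_ge (-z)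
          refine le_iSup_of_le n (le_of_eq ?_)
          rw [max_eq_left (by linarith), show ((n:ℝ) - ((n:ℝ) + z)) = -z by ring, neg_sq]
      calc ∫⁻ z, ⨆ n : ℕ, ENNReal.ofReal (((n:ℝ) - max ((n:ℝ) + z) 0) ^ 2)
            ∂(gaussianReal 0 1)
          = ∫⁻ z, ENNReal.ofReal (z ^ 2) ∂(gaussianReal 0 1) := by
            exact lintegral_congr hptw
        _ = 1 := PosPartAux.lint_sq
    have htarget : ENNReal.ofReal ((1 + ε) / 2)
        = ENNReal.ofReal (1 - ε) * ENNReal.ofReal (1/2)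
          + ENNReal.ofReal ε * (⨆ n : ℕ, F (n : ℝ)) := by
      rw [hsum, mul_one, ← ENNReal.ofReal_mul (by linarith),
        ← ENNReal.ofReal_add (by nlinarith) hε0]
      congr 1
      ring
    rw [htarget, ENNReal.mul_iSup, ENNReal.add_iSup]
    refine iSup_le fun n => ?_
    set ν : Measure ℝ := ENNReal.ofReal (1 - ε) • Measure.dirac 0
      + ENNReal.ofReal ε • Measure.dirac (n : ℝ) with hνdef
    have hprob : IsProbabilityMeasure ν := by
      constructor
      rw [hνdef]
      simp only [Measure.add_apply, Measure.smul_apply, smul_eq_mul, measure_univ, mul_one]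
      rw [← ENNReal.ofReal_add (by linarith) hε0]
      norm_num
    haveI := hprob
    have hmem : ν ∈ posSparse ε := by
      refine ⟨hprob, ?_, ?_⟩
      · rw [hνdef]
        simp only [Measure.add_apply, Measure.smul_apply, smul_eq_mul]
        have h1 : Measure.dirac (0:ℝ) {x : ℝ | x < 0} = 0 := by
          rw [Measure.dirac_apply]
          simp [Set.indicator_apply]
        have h2 : Measure.dirac ((n:ℝ)) {x : ℝ | x < 0} = 0 := by
          rw [Measure.dirac_apply]
          simp [Set.indicator_apply, not_lt.mpr (by positivity : (0:ℝ) ≤ (n:ℝ))]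
        rw [h1, h2, mul_zero, mul_zero, add_zero]
      · rw [hνdef]
        simp only [Measure.add_apply, Measure.smul_apply, smul_eq_mul]
        have h1 : Measure.dirac (0:ℝ) {x : ℝ | x ≠ 0} = 0 := by
          rw [Measure.dirac_apply]
          simp [Set.indicator_apply]
        rw [h1, mul_zero, zero_add]
        calc ENNReal.ofReal ε * Measure.dirac ((n:ℝ)) {x : ℝ | x ≠ 0}
            ≤ ENNReal.ofReal ε * 1 := mul_le_mul_right prob_le_one _
          _ = ENNReal.ofReal ε := mul_one _
    have hI : (∫⁻ p : ℝ × ℝ, ENNReal.ofReal ((p.1 - max (p.1 + p.2) 0) ^ 2)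
        ∂(ν.prod (gaussianReal 0 1)))
        = ENNReal.ofReal (1 - ε) * ENNReal.ofReal (1/2) + ENNReal.ofReal ε * F (n : ℝ) := by
      rw [MeasureTheory.lintegral_prod _ hmeas.aemeasurable]
      rw [hνdef, lintegral_add_measure, lintegral_smul_measure, lintegral_smul_measure,
        lintegral_dirac, lintegral_dirac]
      change ENNReal.ofReal (1 - ε) * F 0 + ENNReal.ofReal ε * F (n : ℝ) = _
      rw [hF0]
    exact le_iSup₂_of_le ν hmem (le_of_eq hI.symm)
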